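/- Fix a cell index j and a user index m. Assume the pilot-contamination term satisfies Σ_{ℓ∈𝓛_j(r), ℓ≠j} β_{j,ℓ,m}² > 0, and define κ_{j,m} = [ (1/(ρ_{p,j,m}² ρ_{d,j,m}²)) · Σ_{ℓ=0}^{L−1} Σ_{k=0}^{K−1} ρ_{d,ℓ,k}² β_{j,ℓ,k}² ] / [ Σ_{ℓ∈𝓛_j(r), ℓ≠j} β_{j,ℓ,m}² ]. Then SINR^{SP}_{j,m}(κ_{j,m}) = SINR^{TP}_{j,m}, and for every uplink duration C_u > κ_{j,m} one has SINR^{SP}_{j,m}(C_u) > SINR^{TP}_{j,m}; i.e., C_u > κ_{j,m} is a sufficient condition for the superimposed-pilot SINR to exceed the time-multiplexed-pilot SINR. -/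

import Mathlib

open Finset

/-- Theorem 1 (superimposed-pilot SINR vs. time-multiplexed-pilot SINR): with
`κ` defined as the ratio of the superimposed-pilot interference factor to the
pilot-contamination term, the superimposed-pilot SINR at uplink duration `κ`
equals the time-multiplexed-pilot SINR, and for every uplink duration
`Cu > κ` the superimposed-pilot SINR strictly exceeds it. -/
theorem stmt0 (L K : ℕ) (hL : 2 ≤ L) (hK : 1 ≤ K)
    (β ρd ρp : Fin L → Fin K → ℝ)
    (hβ : ∀ ℓ k, 0 < β ℓ k) (hρd : ∀ ℓ k, 0 < ρd ℓ k) (hρp : ∀ ℓ k, 0 < ρp ℓ k)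
    (𝓛 : Finset (Fin L)) (j : Fin L) (hj : j ∈ 𝓛) (m : Fin K)
    (hden : 0 < ∑ ℓ ∈ 𝓛.erase j, (β ℓ m) ^ 2)
    (SINR_TP : ℝ)
    (hTP : SINR_TP = (β j m) ^ 2 / ∑ ℓ ∈ 𝓛.erase j, (β ℓ m) ^ 2)
    (SINR_SP : ℝ → ℝ)
    (hSP : ∀ Cu : ℝ, SINR_SP Cu = (β j m) ^ 2 /
      ((1 / (Cu * (ρp j m) ^ 2 * (ρd j m) ^ 2)) *
        ∑ ℓ, ∑ k, (ρd ℓ k) ^ 2 * (β ℓ k) ^ 2))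
    (κ : ℝ)
    (hκ : κ = ((1 / ((ρp j m) ^ 2 * (ρd j m) ^ 2)) *
        ∑ ℓ, ∑ k, (ρd ℓ k) ^ 2 * (β ℓ k) ^ 2) /
      ∑ ℓ ∈ 𝓛.erase j, (β ℓ m) ^ 2) :
    SINR_SP κ = SINR_TP ∧ ∀ Cu : ℝ, κ < Cu → SINR_TP < SINR_SP Cu := by
  have hKne : Nonempty (Fin K) := ⟨⟨0, hK⟩⟩
  have hLne : Nonempty (Fin L) := ⟨⟨0, by omega⟩⟩
  set S := ∑ ℓ, ∑ k, (ρd ℓ k) ^ 2 * (β ℓ k) ^ 2 with hSdef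
  set D := ∑ ℓ ∈ 𝓛.erase j, (β ℓ m) ^ 2 with hDdef
  have hS : 0 < S :=
    Finset.sum_pos (fun ℓ _ => Finset.sum_pos
      (fun k _ => mul_pos (pow_pos (hρd ℓ k) 2) (pow_pos (hβ ℓ k) 2))
      Finset.univ_nonempty) Finset.univ_nonempty
  have hP : 0 < (ρp j m) ^ 2 * (ρd j m) ^ 2 :=
    mul_pos (pow_pos (hρp j m) 2) (pow_pos (hρd j m) 2)
  have hκpos : 0 < κ := by
    rw [hκ]
    exact div_pos (mul_pos (one_div_pos.mpr hP) hS) hden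
  have hNum : 0 < (β j m) ^ 2 := pow_pos (hβ j m) 2
  have key : (1 / (κ * (ρp j m) ^ 2 * (ρd j m) ^ 2)) * S = D := by
    rw [hκ]
    field_simp [hS.ne', hden.ne', (hρp j m).ne', (hρd j m).ne']
  constructor
  · rw [hSP, hTP, key]
  · intro Cu hCu
    rw [hSP, hTP]
    have hCupos : 0 < Cu := hκpos.trans hCu
    have hPC : 0 < Cu * (ρp j m) ^ 2 * (ρd j m) ^ 2 := by
      rw [mul_assoc]; exact mul_pos hCupos hP
    have hPκ : 0 < κ * (ρp j m) ^ 2 * (ρd j m) ^ 2 := by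
      rw [mul_assoc]; exact mul_pos hκpos hP
    have hdpos : 0 < (1 / (Cu * (ρp j m) ^ 2 * (ρd j m) ^ 2)) * S :=
      mul_pos (one_div_pos.mpr hPC) hS
    apply div_lt_div_of_pos_left hNum hdpos
    calc (1 / (Cu * (ρp j m) ^ 2 * (ρd j m) ^ 2)) * S
        < (1 / (κ * (ρp j m) ^ 2 * (ρd j m) ^ 2)) * S := by
          apply mul_lt_mul_of_pos_right _ hS
          rw [div_lt_div_iff₀ hPC hPκ]
          nlinarith
      _ = D := key
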